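/- Let n ≥ 2. In the root system of type B_n, the minimum, over simple roots α_k ∈ Π (1 ≤ k ≤ n), of the resonant codimension of Π ∖ {α_k} equals 2n − 1. -/

import Mathlib

namespace Stmt4Aux

noncomputable def ee (n : ℕ) (i : Fin n) : Fin n → ℝ := Pi.single i 1

lemma ee_apply {n : ℕ} (i j : Fin n) : ee n i j = if j = i then 1 else 0 :=
  Pi.single_apply i 1 j

lemma ee_inj {n : ℕ} {i j : Fin n} (h : ee n i = ee n j) : i = j := by
  by_contra hne
  have h2 := congrFun h i
  rw [ee_apply, ee_apply, if_pos rfl, if_neg hne] at h2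
  exact one_ne_zero h2

noncomputable def aa (n : ℕ) (k : Fin n) : Fin n → ℝ :=
  if h : (k : ℕ) + 1 < n then ee n k - ee n ⟨(k : ℕ) + 1, h⟩ else ee n k

def SpSet (n : ℕ) : Set (Fin n → ℝ) :=
  {v | (∃ i j : Fin n, i < j ∧ (v = ee n i - ee n j ∨ v = ee n i + ee n j)) ∨ ∃ i : Fin n, v = ee n i}

lemma SpSet_finite (n : ℕ) : (SpSet n).Finite := by
  have hsub : SpSet n ⊆ Set.range (fun p : Fin n × Fin n × Fin 3 =>
      if p.2.2 = 0 then ee n p.1 - ee n p.2.1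
      else if p.2.2 = 1 then ee n p.1 + ee n p.2.1 else ee n p.1) := by
    rintro v (⟨i, j, _, h | h⟩ | ⟨i, h⟩)
    · exact ⟨(i, j, 0), by simp [h]⟩
    · exact ⟨(i, j, 1), by
        norm_num [h, show (1 : Fin 3) ≠ 0 by decide]⟩
    · exact ⟨(i, i, 2), by
        norm_num [h, show (2 : Fin 3) ≠ 0 by decide, show (2 : Fin 3) ≠ 1 by decide]⟩
  exact (Set.finite_range _).subset hsub

noncomputable def phiMap (n : ℕ) (k : Fin n) : (Fin n → ℝ) →ₗ[ℝ] ℝ :=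
  ∑ i ∈ Finset.univ.filter (fun i => i ≤ k), LinearMap.proj i

lemma phi_ee {n : ℕ} (k i : Fin n) : phiMap n k (ee n i) = if i ≤ k then 1 else 0 := by
  simp only [phiMap, LinearMap.sum_apply, LinearMap.proj_apply, ee_apply]
  rw [Finset.sum_ite_eq' _ i (fun _ => (1 : ℝ))]
  simp

noncomputable def sc (n : ℕ) : (Fin n → ℝ) →ₗ[ℝ] ℝ := ∑ i, LinearMap.proj i

lemma sc_ee {n : ℕ} (i : Fin n) : sc n (ee n i) = 1 := by
  simp only [sc, LinearMap.sum_apply, LinearMap.proj_apply, ee_apply]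
  rw [Finset.sum_ite_eq' _ i (fun _ => (1 : ℝ))]
  simp

lemma phi_aa {n : ℕ} {k i : Fin n} (h : i ≠ k) : phiMap n k (aa n i) = 0 := by
  have hik : (i : ℕ) ≠ (k : ℕ) := fun hh => h (Fin.ext hh)
  unfold aa
  split_ifs with h1
  · rw [map_sub, phi_ee, phi_ee]
    simp only [Fin.le_def]
    split_ifs with h2 h3 h3
    all_goals try norm_num
    all_goals omega
  · rw [phi_ee, if_neg]
    intro hle
    have hi := i.2
    have hk := k.2
    rw [Fin.le_def] at hle
    omega

lemma span_le_ker {n : ℕ} (k : Fin n) :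
    Submodule.span ℝ (Set.range (aa n) \ {aa n k}) ≤ LinearMap.ker (phiMap n k) := by
  rw [Submodule.span_le]
  rintro v ⟨⟨i, rfl⟩, hne⟩
  have hik : i ≠ k := fun hh => hne (by rw [hh]; exact Set.mem_singleton _)
  exact LinearMap.mem_ker.mpr (phi_aa hik)

noncomputable def FF (n : ℕ) (k : Fin n) (m : Fin (2 * n - 1)) : Fin n → ℝ :=
  if h : (m : ℕ) < n - 1 then
    ee n ⟨0, by have := m.2; omega⟩ + ee n ⟨(m : ℕ) + 1, by have := m.2; omega⟩
  else if h2 : (m : ℕ) - (n - 1) ≤ (k : ℕ) then ee n ⟨(m : ℕ) - (n - 1), by have := m.2; omega⟩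
  else ee n k - ee n ⟨(m : ℕ) - (n - 1), by have := m.2; omega⟩

lemma FF_mem {n : ℕ} (k : Fin n) (m : Fin (2 * n - 1)) :
    FF n k m ∈ SpSet n ∧ phiMap n k (FF n k m) ≠ 0 := by
  have hm := m.2
  have hk := k.2
  unfold FF
  split_ifs with h1 h2
  · constructor
    · exact Or.inl ⟨_, _, by simp [Fin.lt_def], Or.inr rfl⟩
    · rw [map_add, phi_ee, phi_ee]
      have h0 : (⟨0, by omega⟩ : Fin n) ≤ k := by simp [Fin.le_def]
      rw [if_pos h0]
      split_ifs <;> norm_num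
  · constructor
    · exact Or.inr ⟨_, rfl⟩
    · rw [phi_ee, if_pos (by simpa [Fin.le_def] using h2)]
      norm_num
  · constructor
    · exact Or.inl ⟨k, _, by simp only [Fin.lt_def]; omega, Or.inl rfl⟩
    · rw [map_sub, phi_ee, phi_ee, if_pos le_rfl, if_neg (by simpa [Fin.le_def] using h2)]
      norm_num

lemma FF_inj {n : ℕ} (k : Fin n) : Function.Injective (FF n k) := by
  intro m m' h
  have hm := m.2
  have hm' := m'.2
  unfold FF at h
  apply Fin.ext
  split_ifs at h with h1 h2 h3 h4 h5 h6 h7 h8 h9 <;>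
    first
      | (have hs := congrArg (sc n) h; simp only [map_add, map_sub, sc_ee] at hs; norm_num at hs)
      | skip
  · have := ee_inj (add_left_cancel h)
    rw [Fin.mk.injEq] at this
    omega
  · have := ee_inj h
    rw [Fin.mk.injEq] at this
    omega
  · have := ee_inj (sub_right_injective h)
    rw [Fin.mk.injEq] at this
    omega

lemma rc_ge {n : ℕ} (hn : 2 ≤ n) (k : Fin n) :
    2 * n - 1 ≤ {v | v ∈ SpSet n ∧
      v ∉ Submodule.span ℝ (Set.range (aa n) \ {aa n k})}.ncard := by
  have hsub : Set.range (FF n k) ⊆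
      {v | v ∈ SpSet n ∧ v ∉ Submodule.span ℝ (Set.range (aa n) \ {aa n k})} := by
    rintro _ ⟨m, rfl⟩
    refine ⟨(FF_mem k m).1, fun hv => (FF_mem k m).2 ?_⟩
    exact LinearMap.mem_ker.mp (span_le_ker k hv)
  have hfin : {v | v ∈ SpSet n ∧
      v ∉ Submodule.span ℝ (Set.range (aa n) \ {aa n k})}.Finite :=
    (SpSet_finite n).subset (fun v hv => hv.1)
  calc 2 * n - 1 = (Set.range (FF n k)).ncard := by
        rw [← Nat.card_coe_set_eq, Nat.card_range_of_injective (FF_inj k),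
          Nat.card_eq_fintype_card, Fintype.card_fin]
    _ ≤ _ := Set.ncard_le_ncard hsub hfin

lemma aa_ne {n : ℕ} [NeZero n] (hn : 2 ≤ n) {j : Fin n} (hj : j ≠ 0) : aa n j ≠ aa n 0 := by
  intro h
  have hj' : (j : ℕ) ≠ 0 := fun hh => hj (Fin.ext (by simpa using hh))
  have h0 : aa n 0 0 = 1 := by
    unfold aa
    rw [dif_pos (by simp; omega)]
    simp [ee_apply, Fin.ext_iff]
  have hjv : aa n j 0 = 0 := by
    have ha : ¬((0 : ℕ) = (j : ℕ)) := fun hh => hj' hh.symm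
    have hb : ¬((0 : ℕ) = (j : ℕ) + 1) := by omega
    unfold aa
    split_ifs with h1 <;>
      simp only [ee_apply, Pi.sub_apply, Fin.ext_iff, Fin.val_zero, ha, hb, if_false, sub_zero]
  rw [h, h0] at hjv
  exact one_ne_zero hjv

lemma single_mem_span {n : ℕ} [NeZero n] (hn : 2 ≤ n) :
    ∀ d (j : Fin n), (j : ℕ) + d = n - 1 → j ≠ 0 →
      ee n j ∈ Submodule.span ℝ (Set.range (aa n) \ {aa n 0}) := by
  intro d
  induction d with
  | zero =>
    intro j hj hj0
    have hj1 : ¬ ((j : ℕ) + 1 < n) := by omega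
    have heq : aa n j = ee n j := dif_neg hj1
    rw [← heq]
    exact Submodule.subset_span ⟨⟨j, rfl⟩, by simpa using aa_ne hn hj0⟩
  | succ d ih =>
    intro j hj hj0
    have hj1 : (j : ℕ) + 1 < n := by omega
    have hstep : ee n j = aa n j + ee n ⟨(j : ℕ) + 1, hj1⟩ := by
      unfold aa
      rw [dif_pos hj1]
      abel
    rw [hstep]
    refine Submodule.add_mem _
      (Submodule.subset_span ⟨⟨j, rfl⟩, by simpa using aa_ne hn hj0⟩)
      (ih ⟨(j : ℕ) + 1, hj1⟩ (by simp only [Fin.val_mk]; omega)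
        (by simp only [ne_eq, Fin.ext_iff, Fin.val_mk, Fin.val_zero]; omega))

lemma bad0_subset {n : ℕ} [NeZero n] (hn : 2 ≤ n) :
    {v | v ∈ SpSet n ∧ v ∉ Submodule.span ℝ (Set.range (aa n) \ {aa n 0})} ⊆
      Set.range (FF n 0) := by
  rintro v ⟨hSp, hspan⟩
  have esp : ∀ j : Fin n, j ≠ 0 → ee n j ∈ Submodule.span ℝ (Set.range (aa n) \ {aa n 0}) := by
    intro j hj
    refine single_mem_span hn (n - 1 - (j : ℕ)) j ?_ hj
    have := j.2
    omega
  have hne0 : ∀ {i j : Fin n}, i < j → j ≠ 0 := by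
    intro i j hij hj
    rw [hj, Fin.lt_def] at hij
    simp at hij
  rcases hSp with ⟨i, j, hij, h | h⟩ | ⟨i, h⟩
  · subst h
    by_cases hi : i = 0
    · subst hi
      have hjne : (j : ℕ) ≠ 0 := fun hh => hne0 hij (Fin.ext (by simpa using hh))
      have hjlt := j.2
      refine ⟨⟨(n - 1) + (j : ℕ), by omega⟩, ?_⟩
      unfold FF
      rw [dif_neg (by simp only [Fin.val_mk]; omega),
        dif_neg (by simp only [Fin.val_mk, Fin.val_zero]; omega)]
      congr 1
      exact congrArg (ee n) (Fin.ext (by simp only [Fin.val_mk]; omega))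
    · exact absurd (Submodule.sub_mem _ (esp i hi) (esp j (hne0 hij))) hspan
  · subst h
    by_cases hi : i = 0
    · subst hi
      have hjne : (j : ℕ) ≠ 0 := fun hh => hne0 hij (Fin.ext (by simpa using hh))
      have hjlt := j.2
      refine ⟨⟨(j : ℕ) - 1, by omega⟩, ?_⟩
      unfold FF
      rw [dif_pos (by simp only [Fin.val_mk]; omega)]
      congr 1
      exact congrArg (ee n) (Fin.ext (by simp only [Fin.val_mk]; omega))
    · exact absurd (Submodule.add_mem _ (esp i hi) (esp j (hne0 hij))) hspan
  · subst h
    by_cases hi : i = 0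
    · subst hi
      refine ⟨⟨n - 1, by omega⟩, ?_⟩
      unfold FF
      rw [dif_neg (by simp only [Fin.val_mk]; omega),
        dif_pos (by simp only [Fin.val_mk, Fin.val_zero]; omega)]
      exact congrArg (ee n) (Fin.ext (by simp only [Fin.val_mk, Fin.val_zero]; omega))
    · exact absurd (esp i hi) hspan

lemma rc0_le {n : ℕ} [NeZero n] (hn : 2 ≤ n) :
    {v | v ∈ SpSet n ∧
      v ∉ Submodule.span ℝ (Set.range (aa n) \ {aa n 0})}.ncard ≤ 2 * n - 1 := by
  calc {v | v ∈ SpSet n ∧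
      v ∉ Submodule.span ℝ (Set.range (aa n) \ {aa n 0})}.ncard
      ≤ (Set.range (FF n 0)).ncard :=
        Set.ncard_le_ncard (bad0_subset hn) (Set.finite_range _)
    _ = 2 * n - 1 := by
        rw [← Nat.card_coe_set_eq, Nat.card_range_of_injective (FF_inj 0),
          Nat.card_eq_fintype_card, Fintype.card_fin]

end Stmt4Aux

open Stmt4Aux in
/-- In the root system of type `B_n` (`n ≥ 2`), the minimum over simple roots `α_k` of the
resonant codimension of `Π \ {α_k}` equals `2n - 1`. -/
theorem stmt4 (n : ℕ) (hn : 2 ≤ n) :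
    let e : Fin n → (Fin n → ℝ) := fun i => Pi.single i 1
    let Sp : Set (Fin n → ℝ) :=
      {v | (∃ i j : Fin n, i < j ∧ (v = e i - e j ∨ v = e i + e j)) ∨ ∃ i : Fin n, v = e i}
    let α : Fin n → (Fin n → ℝ) := fun k =>
      if h : (k : ℕ) + 1 < n then e k - e ⟨(k : ℕ) + 1, h⟩ else e k
    let rc : Set (Fin n → ℝ) → ℕ := fun Pi' =>
      Set.ncard {v | v ∈ Sp ∧ v ∉ Submodule.span ℝ Pi'}
    (⨅ k : Fin n, rc (Set.range α \ {α k})) = 2 * n - 1 := by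
  haveI : NeZero n := ⟨by omega⟩
  intro e Sp α rc
  have hub : (⨅ k : Fin n, rc (Set.range α \ {α k})) ≤ 2 * n - 1 := by
    refine le_trans (ciInf_le (OrderBot.bddBelow _) (0 : Fin n)) ?_
    exact rc0_le hn
  have hlb : 2 * n - 1 ≤ ⨅ k : Fin n, rc (Set.range α \ {α k}) :=
    le_ciInf fun k => rc_ge hn k
  omega
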